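/- If X is a finite-dimensional Noetherian topological space in which every maximal chain of irreducible closed subsets has the same length, then X is catenary: for all irreducible closed subsets Y ⊆ Z of X, all saturated chains of irreducible closed subsets starting at Y and ending at Z have the same length. -/

import Mathlib

open Order TopologicalSpace

/-- A maximal chain of irreducible closed subsets. -/
def IsMaximalChain {α : Type*} [PartialOrder α] (p : LTSeries α) : Prop :=
  IsMin p.head ∧ IsMax p.last ∧ ∀ i : Fin p.length, p.toFun i.castSucc ⋖ p.toFun i.succ

section Aux

variable {α : Type*} [PartialOrder α] {n : ℕ}

/-- In an order with bounded chain lengths, any `x < y` admits `z` with `x ⋖ z ≤ y`. -/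
lemma aux_exists_covBy_le_of_lt (hn : ∀ p : LTSeries α, p.length ≤ n) {x y : α} (hxy : x < y) :
    ∃ z, x ⋖ z ∧ z ≤ y := by
  by_contra hcon
  push_neg at hcon
  have key : ∀ k : ℕ, ∃ p : LTSeries α, p.length = k + 1 ∧ p.head = x ∧ p.last ≤ y := by
    intro k
    induction k with
    | zero =>
      have hr : ((RelSeries.singleton {(a, b) : α × α | a < b} x).last : α) < y := by
        rw [RelSeries.last_singleton]; exact hxy
      exact ⟨(RelSeries.singleton _ x).snoc y hr, by simp, by simp, by simp⟩
    | succ k ih =>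
      obtain ⟨p, hlen, hhead, hlast⟩ := ih
      have h1 : (1 : ℕ) < p.length + 1 := by omega
      set z := p.toFun ⟨1, h1⟩ with hz
      have hxz : x < z := by
        rw [← hhead]
        exact p.strictMono (by simp [Fin.lt_def])
      have hzy : z ≤ y := le_trans (p.monotone (by exact Fin.le_last _)) hlast
      have : ¬ x ⋖ z := fun h => hcon z h hzy
      obtain ⟨w, hxw, hwz⟩ := (not_covBy_iff hxz).mp this
      have hd : (p.drop ⟨1, h1⟩).head = z := by rw [RelSeries.head_drop]
      refine ⟨(((p.drop ⟨1, h1⟩).cons w (by rw [hd]; exact hwz)).cons x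
        (by rw [RelSeries.head_cons]; exact hxw)), ?_, by simp, by simpa using hlast⟩
      simp [hlen]
  obtain ⟨p, hp, -, -⟩ := key n
  have := hn p
  omega

/-- Dual version: any `x < y` admits `z` with `x ≤ z ⋖ y`. -/
lemma aux_exists_le_covBy_of_lt (hn : ∀ p : LTSeries α, p.length ≤ n) {x y : α} (hxy : x < y) :
    ∃ z, z ⋖ y ∧ x ≤ z := by
  by_contra hcon
  push_neg at hcon
  have key : ∀ k : ℕ, ∃ p : LTSeries α, p.length = k + 1 ∧ x ≤ p.head ∧ p.last = y := by
    intro k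
    induction k with
    | zero =>
      have hr : ((RelSeries.singleton {(a, b) : α × α | a < b} x).last : α) < y := by
        rw [RelSeries.last_singleton]; exact hxy
      exact ⟨(RelSeries.singleton _ x).snoc y hr, by simp, by simp, by simp⟩
    | succ k ih =>
      obtain ⟨p, hlen, hhead, hlast⟩ := ih
      have h1 : p.length - 1 < p.length + 1 := by omega
      set z := p.toFun ⟨p.length - 1, h1⟩ with hz
      have hzy : z < y := by
        rw [← hlast]
        exact p.strictMono (by simp [Fin.lt_def, Fin.last]; omega)
      have hxz : x ≤ z := le_trans hhead (p.monotone (by exact Fin.zero_le _))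
      have : ¬ z ⋖ y := fun h => hcon z h hxz
      obtain ⟨w, hzw, hwy⟩ := (not_covBy_iff hzy).mp this
      have ht : (p.take ⟨p.length - 1, h1⟩).last = z := by rw [RelSeries.last_take]
      refine ⟨(((p.take ⟨p.length - 1, h1⟩).snoc w (by rw [ht]; exact hzw)).snoc y
        (by rw [RelSeries.last_snoc]; exact hwy)), ?_, by simpa using hhead, by simp⟩
      simp [RelSeries.snoc, RelSeries.take, hlen]
  obtain ⟨p, hp, -, -⟩ := key n
  have := hn p
  omega

/-- Every element is the head of a saturated chain ending at a maximal element. -/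
lemma exists_covChain_to_max (hn : ∀ p : LTSeries α, p.length ≤ n) (x : α) :
    ∃ c : RelSeries {(a, b) : α × α | a ⋖ b}, c.head = x ∧ IsMax c.last := by
  suffices H : ∀ (k : ℕ) (x : α), (∀ p : LTSeries α, p.head = x → p.length ≤ k) →
      ∃ c : RelSeries {(a, b) : α × α | a ⋖ b}, c.head = x ∧ IsMax c.last by
    exact H n x (fun p _ => hn p)
  intro k
  induction k with
  | zero =>
    intro x hk
    by_cases hx : IsMax x
    · exact ⟨RelSeries.singleton _ x, RelSeries.head_singleton _,
        by rw [RelSeries.last_singleton]; exact hx⟩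
    · obtain ⟨y, hy⟩ := not_isMax_iff.mp hx
      have hr : ((RelSeries.singleton {(a, b) : α × α | a < b} x).last : α) < y := by
        rw [RelSeries.last_singleton]; exact hy
      have h2 := hk ((RelSeries.singleton _ x).snoc y hr) (by simp)
      simp at h2
  | succ k ih =>
    intro x hk
    by_cases hx : IsMax x
    · exact ⟨RelSeries.singleton _ x, RelSeries.head_singleton _,
        by rw [RelSeries.last_singleton]; exact hx⟩
    · obtain ⟨y, hy⟩ := not_isMax_iff.mp hx
      obtain ⟨z, hxz, _⟩ := aux_exists_covBy_le_of_lt hn hy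
      obtain ⟨c, hch, hcl⟩ := ih z (fun p hp => by
        have := hk (p.cons x (by rw [hp]; exact hxz.lt)) (by simp)
        simpa using this)
      exact ⟨c.cons x (by rw [hch]; exact hxz), by simp, by simpa using hcl⟩

/-- Every element is the last of a saturated chain starting at a minimal element. -/
lemma exists_covChain_from_min (hn : ∀ p : LTSeries α, p.length ≤ n) (x : α) :
    ∃ c : RelSeries {(a, b) : α × α | a ⋖ b}, c.last = x ∧ IsMin c.head := by
  suffices H : ∀ (k : ℕ) (x : α), (∀ p : LTSeries α, p.last = x → p.length ≤ k) →
      ∃ c : RelSeries {(a, b) : α × α | a ⋖ b}, c.last = x ∧ IsMin c.head by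
    exact H n x (fun p _ => hn p)
  intro k
  induction k with
  | zero =>
    intro x hk
    by_cases hx : IsMin x
    · exact ⟨RelSeries.singleton _ x, RelSeries.last_singleton _,
        by rw [RelSeries.head_singleton]; exact hx⟩
    · obtain ⟨y, hy⟩ := not_isMin_iff.mp hx
      have hr : ((RelSeries.singleton {(a, b) : α × α | a < b} y).last : α) < x := by
        rw [RelSeries.last_singleton]; exact hy
      have h2 := hk ((RelSeries.singleton _ y).snoc x hr) (by simp)
      simp at h2
  | succ k ih =>
    intro x hk
    by_cases hx : IsMin x
    · exact ⟨RelSeries.singleton _ x, RelSeries.last_singleton _,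
        by rw [RelSeries.head_singleton]; exact hx⟩
    · obtain ⟨y, hy⟩ := not_isMin_iff.mp hx
      obtain ⟨z, hzx, _⟩ := aux_exists_le_covBy_of_lt hn hy
      obtain ⟨c, hcl, hch⟩ := ih z (fun p hp => by
        have := hk (p.snoc x (by rw [hp]; exact hzx.lt)) (by simp)
        simpa using this)
      exact ⟨c.snoc x (by rw [hcl]; exact hzx), by simp, by simpa using hch⟩

/-- Turn a chain of covering relations into an `LTSeries`. -/
def covChainToLT (c : RelSeries {(a, b) : α × α | a ⋖ b}) : LTSeries α where
  length := c.length
  toFun := c.toFun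
  step := fun i => (c.step i).lt

lemma isMaximalChain_covChainToLT (c : RelSeries {(a, b) : α × α | a ⋖ b})
    (h1 : IsMin c.head) (h2 : IsMax c.last) : IsMaximalChain (covChainToLT c) :=
  ⟨h1, h2, fun i => c.step i⟩

end Aux

/-- If `X` is a finite-dimensional Noetherian topological space in which every maximal chain of
irreducible closed subsets has the same length, then `X` is catenary: any two saturated chains
of irreducible closed subsets (chains in which each step is a covering relation) with the same
first element and the same last element have the same length. -/
theorem stmt_2 (X : Type*) [TopologicalSpace X] [NoetherianSpace X]
    (hfd : topologicalKrullDim X < ⊤)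
    (hbieq : ∀ p q : LTSeries (IrreducibleCloseds X),
      IsMaximalChain p → IsMaximalChain q → p.length = q.length) :
    ∀ p q : RelSeries {(a, b) : IrreducibleCloseds X × IrreducibleCloseds X | a ⋖ b},
      p.head = q.head → p.last = q.last → p.length = q.length := by
  intro p q hh hl
  -- extract a natural number bound on lengths of chains
  obtain ⟨n, hn⟩ : ∃ n : ℕ, ∀ r : LTSeries (IrreducibleCloseds X), r.length ≤ n := by
    rw [topologicalKrullDim] at hfd
    rcases hd : krullDim (IrreducibleCloseds X) with _ | m
    · refine ⟨0, fun r => ?_⟩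
      have := Order.LTSeries.length_le_krullDim r
      have hbot : krullDim (IrreducibleCloseds X) = (⊥ : WithBot ℕ∞) := hd
      rw [hbot] at this
      simp at this
    · rcases m with _ | k
      · rw [hd] at hfd
        exact absurd hfd (lt_irrefl _)
      · refine ⟨k, fun r => ?_⟩
        have := Order.LTSeries.length_le_krullDim r
        have hk' : krullDim (IrreducibleCloseds X) = ((k : ℕ∞) : WithBot ℕ∞) := hd
        rw [hk'] at this
        exact_mod_cast this
  obtain ⟨a, hal, ham⟩ := exists_covChain_from_min hn p.head
  obtain ⟨b, hbh, hbm⟩ := exists_covChain_to_max hn p.last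
  have hconn₁ : (a.smash p hal).last = b.head := by rw [RelSeries.last_smash, hbh]
  have hconn₂ : (a.smash q (hal.trans hh)).last = b.head := by
    rw [RelSeries.last_smash, hbh, hl]
  have hmax₁ : IsMaximalChain (covChainToLT ((a.smash p hal).smash b hconn₁)) := by
    apply isMaximalChain_covChainToLT
    · rw [RelSeries.head_smash, RelSeries.head_smash]; exact ham
    · rw [RelSeries.last_smash]; exact hbm
  have hmax₂ : IsMaximalChain (covChainToLT ((a.smash q (hal.trans hh)).smash b hconn₂)) := by
    apply isMaximalChain_covChainToLT
    · rw [RelSeries.head_smash, RelSeries.head_smash]; exact ham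
    · rw [RelSeries.last_smash]; exact hbm
  have := hbieq _ _ hmax₁ hmax₂
  simp only [covChainToLT, RelSeries.smash_length] at this
  omega
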